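/- Let n ≥ 1 and let f, g : {0,1}ⁿ → ℂ both satisfy the even Parity Condition, with f(0ⁿ) = g(0ⁿ) = 1 and f(α) = g(α) for every α of Hamming weight 2. Suppose g satisfies all Matchgate Identities, and for every ℓ ∈ {1,…,n} the restriction f^{x_ℓ=0} satisfies all Matchgate Identities. Then f(α) = g(α) for every α ∈ {0,1}ⁿ of Hamming weight less than n. -/

import Mathlib

/-- The Hamming weight of `x ∈ ℤ₂ᵐ`. -/
def wt {m : ℕ} (x : Fin m → ZMod 2) : ℕ :=
  (Finset.univ.filter (fun i => x i = 1)).card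

/-- The vector `e_p ∈ ℤ₂ᵐ` with a `1` in position `p` only. -/
def unitVec {m : ℕ} (p : Fin m) : Fin m → ZMod 2 := fun j => if j = p then 1 else 0

/-- The indicator vector of a position set `P`. -/
def indVec {m : ℕ} (P : Finset (Fin m)) : Fin m → ZMod 2 := fun j => if j ∈ P then 1 else 0

/-- `h` satisfies all Matchgate Identities: for every pattern `α` and every
nonempty position vector `P = {p₁ < ⋯ < p_ℓ}`,
`∑_{i=1}^{ℓ} (-1)^i h(α ⊕ e_{pᵢ}) h(α ⊕ P ⊕ e_{pᵢ}) = 0`.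
The sign `(-1)^i` for `p = pᵢ` is expressed via the rank of `p` in `P`. -/
def SatisfiesMGI {m : ℕ} (h : (Fin m → ZMod 2) → ℂ) : Prop :=
  ∀ (α : Fin m → ZMod 2) (P : Finset (Fin m)), P.Nonempty →
    ∑ p ∈ P, (-1 : ℂ) ^ (P.filter (fun q => q ≤ p)).card *
      h (α + unitVec p) * h (α + indVec P + unitVec p) = 0

lemma zmod2_cases : ∀ a : ZMod 2, a = 0 ∨ a = 1 := by decide

lemma zmod2_aa : ∀ a : ZMod 2, a + a = 0 := by decide

lemma zmod2_aba : ∀ a b : ZMod 2, a + b + a = b := by decide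

lemma wt_eq_zero {m : ℕ} {x : Fin m → ZMod 2} (h : wt x = 0) : x = 0 := by
  funext j
  have := Finset.card_eq_zero.mp h
  rcases zmod2_cases (x j) with h1 | h1
  · exact h1
  · exact absurd (Finset.eq_empty_iff_forall_notMem.mp this j) (by simp [h1])

lemma indVec_supp {m : ℕ} (x : Fin m → ZMod 2) :
    indVec (Finset.univ.filter (fun i => x i = 1)) = x := by
  funext j
  simp only [indVec, Finset.mem_filter, Finset.mem_univ, true_and]
  rcases zmod2_cases (x j) with h1 | h1 <;> simp [h1]

lemma wt_pair {m : ℕ} {p q : Fin m} (h : p ≠ q) : wt (unitVec p + unitVec q) = 2 := by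
  have : Finset.univ.filter (fun i => (unitVec p + unitVec q) i = 1) = {p, q} := by
    ext i
    rw [Finset.mem_filter]
    simp only [Finset.mem_filter, Finset.mem_univ, true_and, Finset.mem_insert,
      Finset.mem_singleton, Pi.add_apply, unitVec]
    by_cases hip : i = p <;> by_cases hiq : i = q <;> simp_all
  rw [wt, this, Finset.card_insert_of_notMem (by simp [h]), Finset.card_singleton]

lemma wt_flip {m : ℕ} {x : Fin m → ZMod 2} {p q : Fin m}
    (hp : x p = 1) (hq : x q = 1) (hpq : p ≠ q) :
    wt (unitVec p + x + unitVec q) = wt x - 2 := by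
  have hset : Finset.univ.filter (fun i => (unitVec p + x + unitVec q) i = 1)
      = ((Finset.univ.filter (fun i => x i = 1)).erase p).erase q := by
    ext i
    rw [Finset.mem_filter]
    simp only [Finset.mem_filter, Finset.mem_univ, true_and, Finset.mem_erase,
      Pi.add_apply, unitVec]
    by_cases hip : i = p <;> by_cases hiq : i = q
    · exact absurd (hip ▸ hiq : p = q) hpq
    · subst hip; simp [hpq, hp]
    · subst hiq; simp [hq, Ne.symm hpq]
    · simp [hip, hiq]
  have hpmem : p ∈ Finset.univ.filter (fun i => x i = 1) := by simp [hp]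
  have hqmem : q ∈ (Finset.univ.filter (fun i => x i = 1)).erase p := by
    simp [hq, Ne.symm hpq]
  rw [wt, hset, Finset.card_erase_of_mem hqmem, Finset.card_erase_of_mem hpmem]
  rfl
lemma mgi_step {m : ℕ} {h : (Fin m → ZMod 2) → ℂ} (hm : SatisfiesMGI h) (h0 : h 0 = 1)
    {x : Fin m → ZMod 2} {S : Finset (Fin m)}
    (hS : S = Finset.univ.filter (fun i => x i = 1)) (hne : S.Nonempty) :
    h x = ∑ p ∈ S.erase (S.min' hne),
      (-1 : ℂ) ^ (S.filter (fun q => q ≤ p)).card *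
        h (unitVec (S.min' hne) + unitVec p) *
        h (unitVec (S.min' hne) + x + unitVec p) := by
  have hmem : S.min' hne ∈ S := S.min'_mem hne
  have key := hm (unitVec (S.min' hne)) S hne
  rw [show indVec S = x from hS ▸ indVec_supp x] at key
  rw [← Finset.add_sum_erase S _ hmem] at key
  have e1 : unitVec (S.min' hne) + unitVec (S.min' hne) = (0 : Fin m → ZMod 2) := by
    funext j; exact zmod2_aa _
  have e2 : unitVec (S.min' hne) + x + unitVec (S.min' hne) = x := by
    funext j; exact zmod2_aba _ _
  have e3 : (S.filter (fun q => q ≤ S.min' hne)).card = 1 := by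
    rw [show S.filter (fun q => q ≤ S.min' hne) = {S.min' hne} by
      ext q
      simp only [Finset.mem_filter, Finset.mem_singleton]
      constructor
      · rintro ⟨hq, hle⟩; exact le_antisymm hle (S.min'_le q hq)
      · rintro rfl; exact ⟨hmem, le_refl _⟩]
    exact Finset.card_singleton _
  rw [e1, e2, e3, h0] at key
  linear_combination -key

lemma key_agree {m : ℕ} {h₁ h₂ : (Fin m → ZMod 2) → ℂ}
    (m1 : SatisfiesMGI h₁) (m2 : SatisfiesMGI h₂) (h10 : h₁ 0 = 1) (h20 : h₂ 0 = 1)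
    (hw2 : ∀ x, wt x = 2 → h₁ x = h₂ x) : ∀ x, h₁ x = h₂ x := by
  suffices H : ∀ (w : ℕ) (x : Fin m → ZMod 2), wt x = w → h₁ x = h₂ x by
    intro x; exact H (wt x) x rfl
  intro w
  induction w using Nat.strong_induction_on with
  | _ w ih =>
  intro x hw
  rcases Nat.eq_zero_or_pos w with rfl | hpos
  · rw [wt_eq_zero hw, h10, h20]
  rcases eq_or_ne w 2 with rfl | hw2'
  · exact hw2 x hw
  have hne : (Finset.univ.filter (fun i => x i = 1)).Nonempty := by
    rw [← Finset.card_pos]; change 0 < wt x; omega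
  rw [mgi_step m1 h10 rfl hne, mgi_step m2 h20 rfl hne]
  apply Finset.sum_congr rfl
  intro p hp
  have hpS : p ∈ Finset.univ.filter (fun i => x i = 1) := Finset.mem_of_mem_erase hp
  have hpne : p ≠ (Finset.univ.filter (fun i => x i = 1)).min' hne :=
    Finset.ne_of_mem_erase hp
  have hx1 : x ((Finset.univ.filter (fun i => x i = 1)).min' hne) = 1 := by
    have := Finset.min'_mem _ hne
    simpa using this
  have hxp : x p = 1 := by simpa using hpS
  have e1 : h₁ (unitVec ((Finset.univ.filter (fun i => x i = 1)).min' hne) + unitVec p)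
      = h₂ (unitVec ((Finset.univ.filter (fun i => x i = 1)).min' hne) + unitVec p) :=
    hw2 _ (wt_pair (Ne.symm hpne))
  have e2 : h₁ (unitVec ((Finset.univ.filter (fun i => x i = 1)).min' hne) + x + unitVec p)
      = h₂ (unitVec ((Finset.univ.filter (fun i => x i = 1)).min' hne) + x + unitVec p) := by
    apply ih (w - 2) (by omega)
    rw [wt_flip hx1 hxp (Ne.symm hpne), hw]
  rw [e1, e2]

lemma insertNth_zero_add {m : ℕ} (l : Fin (m + 1)) (a b : Fin m → ZMod 2) :
    (l.insertNth 0 (a + b) : Fin (m + 1) → ZMod 2) = l.insertNth 0 a + l.insertNth 0 b := by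
  funext j
  by_cases hj : j = l
  · rw [hj]; simp
  · obtain ⟨i, rfl⟩ := Fin.exists_succAbove_eq hj
    simp [Fin.insertNth_apply_succAbove]

lemma insertNth_zero_unitVec {m : ℕ} (l : Fin (m + 1)) (p : Fin m) :
    (l.insertNth 0 (unitVec p) : Fin (m + 1) → ZMod 2) = unitVec (l.succAbove p) := by
  funext j
  by_cases hj : j = l
  · rw [hj]; simp [unitVec, Fin.insertNth_apply_same, Fin.ne_succAbove l p]
  · obtain ⟨i, rfl⟩ := Fin.exists_succAbove_eq hj
    simp [Fin.insertNth_apply_succAbove, unitVec, Fin.succAbove_right_inj]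

lemma insertNth_zero_indVec {m : ℕ} (l : Fin (m + 1)) (P : Finset (Fin m)) :
    (l.insertNth 0 (indVec P) : Fin (m + 1) → ZMod 2)
      = indVec (P.map (l.succAboveOrderEmb).toEmbedding) := by
  funext j
  by_cases hj : j = l
  · rw [hj]
    simp only [Fin.insertNth_apply_same, indVec, Finset.mem_map]
    rw [if_neg]
    rintro ⟨i, _, hi⟩
    exact Fin.succAbove_ne l i hi
  · obtain ⟨i, rfl⟩ := Fin.exists_succAbove_eq hj
    simp only [Fin.insertNth_apply_succAbove, indVec, Finset.mem_map]
    congr 1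
    simp only [eq_iff_iff]
    constructor
    · intro hi
      exact ⟨i, hi, rfl⟩
    · rintro ⟨i', hi', hii'⟩
      have : i' = i := Fin.succAbove_right_injective (p := l) hii'
      rwa [← this]

lemma mgi_restrict {m : ℕ} {h : (Fin (m + 1) → ZMod 2) → ℂ} (hm : SatisfiesMGI h)
    (l : Fin (m + 1)) :
    SatisfiesMGI (fun y : Fin m → ZMod 2 => h (l.insertNth 0 y)) := by
  intro α P hP
  have key := hm (l.insertNth 0 α) (P.map (l.succAboveOrderEmb).toEmbedding) hP.map
  rw [Finset.sum_map] at key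
  rw [← key]
  apply Finset.sum_congr rfl
  intro p hp
  have hcard : ((P.map (l.succAboveOrderEmb).toEmbedding).filter
      (fun q => q ≤ (l.succAboveOrderEmb).toEmbedding p)).card
      = (P.filter (fun q => q ≤ p)).card := by
    rw [Finset.filter_map, Finset.card_map]
    congr 1
    apply Finset.filter_congr
    intro q _
    simp [Function.comp, Fin.succAbove_le_succAbove_iff]
    exact l.succAboveOrderEmb.le_iff_le
  rw [hcard]
  congr 1
  · congr 1
    show h (l.insertNth 0 (α + unitVec p)) = _
    rw [insertNth_zero_add, insertNth_zero_unitVec]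
    rfl
  · show h (l.insertNth 0 (α + indVec P + unitVec p)) = _
    rw [insertNth_zero_add, insertNth_zero_add, insertNth_zero_unitVec,
      insertNth_zero_indVec]
    rfl

lemma wt_insertNth_zero {m : ℕ} (l : Fin (m + 1)) (y : Fin m → ZMod 2) :
    wt (l.insertNth 0 y : Fin (m + 1) → ZMod 2) = wt y := by
  have : Finset.univ.filter (fun j => (l.insertNth 0 y : Fin (m + 1) → ZMod 2) j = 1)
      = (Finset.univ.filter (fun i => y i = 1)).map (l.succAboveOrderEmb).toEmbedding := by
    ext j
    simp only [Finset.mem_filter, Finset.mem_univ, true_and, Finset.mem_map]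
    by_cases hj : j = l
    · rw [hj]
      simp only [Fin.insertNth_apply_same]
      constructor
      · intro h0; exact absurd h0 (by decide)
      · rintro ⟨i, _, hi⟩; exact absurd hi (Fin.succAbove_ne l i)
    · obtain ⟨i, rfl⟩ := Fin.exists_succAbove_eq hj
      simp only [Fin.insertNth_apply_succAbove]
      constructor
      · intro hi; exact ⟨i, by simpa using hi, rfl⟩
      · rintro ⟨i', hi', hii'⟩
        have : i' = i := Fin.succAbove_right_injective (p := l) hii'
        subst this; simpa using hi'
  rw [wt, this, Finset.card_map]; rfl

lemma insertNth_zero_zero {m : ℕ} (l : Fin (m + 1)) :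
    (l.insertNth 0 0 : Fin (m + 1) → ZMod 2) = 0 := by
  funext j
  by_cases hj : j = l
  · rw [hj]; simp
  · obtain ⟨i, rfl⟩ := Fin.exists_succAbove_eq hj
    simp [Fin.insertNth_apply_succAbove]

theorem agree_below_top_weight (n : ℕ) (f g : (Fin (n + 1) → ZMod 2) → ℂ)
    (hfpar : ∀ x, Odd (wt x) → f x = 0)
    (hgpar : ∀ x, Odd (wt x) → g x = 0)
    (hf0 : f 0 = 1) (hg0 : g 0 = 1)
    (h2 : ∀ x, wt x = 2 → f x = g x)
    (hgMGI : SatisfiesMGI g)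
    (hfMGI : ∀ l : Fin (n + 1),
      SatisfiesMGI fun y : Fin n → ZMod 2 => f (l.insertNth 0 y)) :
    ∀ x, wt x < n + 1 → f x = g x := by
  intro x hx
  have hex : ∃ l : Fin (n + 1), x l = 0 := by
    by_contra hc
    push_neg at hc
    have hall : ∀ l, x l = 1 := fun l => (zmod2_cases (x l)).resolve_left (hc l)
    have : wt x = n + 1 := by
      rw [wt, Finset.filter_true_of_mem (fun i _ => hall i), Finset.card_univ,
        Fintype.card_fin]
    omega
  obtain ⟨l, hl⟩ := hex
  have hx0 : l.insertNth 0 (l.removeNth x) = x := by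
    rw [← hl]; exact Fin.insertNth_self_removeNth l x
  have h1 := key_agree (hfMGI l) (mgi_restrict hgMGI l)
    (by show f _ = 1; rw [insertNth_zero_zero]; exact hf0)
    (by show g _ = 1; rw [insertNth_zero_zero]; exact hg0)
    (fun y hy => h2 _ (by rw [wt_insertNth_zero]; exact hy))
    (l.removeNth x)
  rw [hx0] at h1
  exact h1
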